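/- arXiv:1107.5400 — 3 statements merged into one kernel-verified Lean document; each statement's English description precedes it below -/
import Mathlib

section
/- Let X, X_1, X_2, ... be i.i.d. real random variables with E[X] = -a < 0, and let S_n = X_1 + ... + X_n with S_0 = 0. For z ≥ 0 define τ_z = min{k ≥ 0 : S_k ≤ -z} and M = sup_{k ≥ 0} S_k, M_{τ_z} = max_{1 ≤ k ≤ τ_z} S_k. Then for every x > 0 and z > 0, P(M > x) ≤ Σ_{j=0}^∞ P(M_{τ_z} > x + j z). -/
open MeasureTheory ProbabilityTheory

section RWAux

open Filter Set

/-- partial sums of a sequence -/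
noncomputable def rwPsum (u : ℕ → ℝ) (m : ℕ) : ℝ := ∑ i ∈ Finset.range m, u i

/-- first time the partial sums fall at or below `-z` -/
noncomputable def rwSigma (z : ℝ) (u : ℕ → ℝ) : ℕ := sInf {k | rwPsum u k ≤ -z}

/-- the event (in sequence space) that the max before `rwSigma` exceeds `c` -/
def rwA (z c : ℝ) : Set (ℕ → ℝ) :=
  {u | c < ⨆ m ∈ Finset.Icc 1 (rwSigma z u), rwPsum u m}

lemma rw_lt_biSup {f : ℕ → ℝ} {N : ℕ} {c : ℝ} {m₀ : ℕ} (hm : m₀ ∈ Finset.Icc 1 N)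
    (hc : c < f m₀) : c < ⨆ m ∈ Finset.Icc 1 N, f m := by
  have hbdd : BddAbove (Set.range fun m => ⨆ _ : m ∈ Finset.Icc 1 N, f m) := by
    apply ((((Finset.Icc 1 N).image f).finite_toSet).insert 0).bddAbove.mono
    rintro y ⟨m, rfl⟩
    show (⨆ _ : m ∈ Finset.Icc 1 N, f m) ∈ _
    by_cases h : m ∈ Finset.Icc 1 N
    · rw [ciSup_pos (f := fun _ => f m) h]
      exact Set.mem_insert_of_mem _ (Finset.mem_coe.2 (Finset.mem_image_of_mem f h))
    · haveI : IsEmpty (m ∈ Finset.Icc 1 N) := ⟨h⟩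
      rw [Real.iSup_of_isEmpty]
      exact Set.mem_insert _ _
  calc c < f m₀ := hc
    _ = ⨆ _ : m₀ ∈ Finset.Icc 1 N, f m₀ := (ciSup_pos (f := fun _ => f m₀) hm).symm
    _ ≤ ⨆ m ∈ Finset.Icc 1 N, f m := le_ciSup hbdd m₀

lemma rw_biSup_lt {f : ℕ → ℝ} {N : ℕ} {c : ℝ} (hc : 0 ≤ c)
    (h : c < ⨆ m ∈ Finset.Icc 1 N, f m) : ∃ m, m ∈ Finset.Icc 1 N ∧ c < f m := by
  by_contra hcon
  push_neg at hcon
  refine absurd h (not_lt.2 (ciSup_le fun m => ?_))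
  by_cases hm : m ∈ Finset.Icc 1 N
  · rw [ciSup_pos (f := fun _ => f m) hm]; exact hcon m hm
  · haveI : IsEmpty (m ∈ Finset.Icc 1 N) := ⟨hm⟩
    rw [Real.iSup_of_isEmpty]; exact hc

lemma rw_sInf_eq_iff {p : ℕ → Prop} {n : ℕ} :
    sInf {k | p k} = n ↔ ((p n ∧ ∀ m < n, ¬ p m) ∨ (n = 0 ∧ ∀ k, ¬ p k)) := by
  constructor
  · intro h
    by_cases hne : ∃ k, p k
    · subst h
      exact Or.inl ⟨Nat.sInf_mem hne, fun m hm => Nat.notMem_of_lt_sInf hm⟩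
    · push_neg at hne
      have he : {k | p k} = ∅ := Set.eq_empty_iff_forall_notMem.2 hne
      exact Or.inr ⟨by rw [← h, he, Nat.sInf_empty], hne⟩
  · rintro (⟨hpn, hmin⟩ | ⟨rfl, hall⟩)
    · refine le_antisymm (Nat.sInf_le hpn) ?_
      by_contra hlt
      push_neg at hlt
      exact hmin _ hlt (Nat.sInf_mem ⟨n, hpn⟩)
    · exact Nat.sInf_eq_zero.2 (Or.inr (Set.eq_empty_iff_forall_notMem.2 hall))

lemma rw_measurable_psum (m : ℕ) : Measurable fun u : ℕ → ℝ => rwPsum u m :=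
  Finset.measurable_sum _ fun i _ => measurable_pi_apply i

lemma rw_measurableSet_sigma (z : ℝ) (n : ℕ) :
    MeasurableSet {u : ℕ → ℝ | rwSigma z u = n} := by
  have hid : {u : ℕ → ℝ | rwSigma z u = n}
      = ({u : ℕ → ℝ | rwPsum u n ≤ -z} ∩ ⋂ m ∈ Set.Iio n, {u : ℕ → ℝ | ¬ rwPsum u m ≤ -z})
        ∪ ({u : ℕ → ℝ | n = 0} ∩ ⋂ k, {u : ℕ → ℝ | ¬ rwPsum u k ≤ -z}) := by
    ext u
    simp only [rwSigma, Set.mem_setOf_eq, Set.mem_union, Set.mem_inter_iff, Set.mem_iInter,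
      Set.mem_Iio]
    exact rw_sInf_eq_iff
  rw [hid]
  refine MeasurableSet.union ?_ ?_
  · exact (measurableSet_le (rw_measurable_psum n) measurable_const).inter
      (MeasurableSet.biInter (Set.to_countable _) fun m _ =>
        (measurableSet_le (rw_measurable_psum m) measurable_const).compl)
  · refine MeasurableSet.inter ?_ (MeasurableSet.iInter fun k =>
      (measurableSet_le (rw_measurable_psum k) measurable_const).compl)
    by_cases h : n = 0 <;> simp [h]

lemma rw_measurableSet_A {z c : ℝ} (hc : 0 ≤ c) : MeasurableSet (rwA z c) := by
  have hid : rwA z c = ⋃ (n : ℕ), ⋃ (m : ℕ), ⋃ (_ : m ∈ Finset.Icc 1 n),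
      ({u : ℕ → ℝ | rwSigma z u = n} ∩ {u : ℕ → ℝ | c < rwPsum u m}) := by
    ext u
    simp only [rwA, Set.mem_setOf_eq, Set.mem_iUnion, Set.mem_inter_iff]
    constructor
    · intro h
      obtain ⟨m, hm, hcm⟩ := rw_biSup_lt hc h
      exact ⟨rwSigma z u, m, hm, rfl, hcm⟩
    · rintro ⟨n, m, hm, hσ, hcm⟩
      exact rw_lt_biSup (by rw [hσ]; exact hm) hcm
  rw [hid]
  exact MeasurableSet.iUnion fun n => MeasurableSet.iUnion fun m => MeasurableSet.iUnion fun _ =>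
    (rw_measurableSet_sigma z n).inter (measurableSet_lt measurable_const (rw_measurable_psum m))

end RWAux

section RWLaw

variable {Ω : Type*} [MeasureSpace Ω] [IsProbabilityMeasure (ℙ : Measure Ω)]
  {X : ℕ → Ω → ℝ}

lemma rw_findim (hmeas : ∀ i, Measurable (X i))
    (hindep : iIndepFun X ℙ)
    (hident : ∀ i, IdentDistrib (X i) (X 0) ℙ ℙ) (n : ℕ) (s : Finset ℕ) :
    Measure.map (fun ω => fun i : s => X (n + (i : ℕ)) ω) ℙ
      = Measure.pi fun _ : s => Measure.map (X 0) ℙ := by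
  classical
  haveI : IsProbabilityMeasure (Measure.map (X 0) ℙ) :=
    Measure.isProbabilityMeasure_map (hmeas 0).aemeasurable
  haveI : ∀ _i : s, SigmaFinite (Measure.map (X 0) ℙ) := fun _ => inferInstance
  refine (Measure.pi_eq (μ := fun _ : s => Measure.map (X 0) ℙ) fun B hB => ?_).symm
  have hT : Measurable fun ω => fun i : s => X (n + (i : ℕ)) ω :=
    measurable_pi_lambda _ fun i => hmeas _
  rw [Measure.map_apply hT (MeasurableSet.univ_pi hB)]
  set BB : ℕ → Set ℝ := fun m => if h : m - n ∈ s then B ⟨m - n, h⟩ else Set.univ with hBB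
  have hBBeq : ∀ (i : ℕ) (hi : i ∈ s), BB (n + i) = B ⟨i, hi⟩ := by
    intro i hi
    simp only [hBB]
    rw [show n + i - n = i by omega, dif_pos hi]
  have hpre : (fun ω => fun i : s => X (n + (i : ℕ)) ω) ⁻¹' Set.pi Set.univ B
      = ⋂ m ∈ Finset.image (fun i => n + i) s, X m ⁻¹' BB m := by
    ext ω
    simp only [Set.mem_preimage, Set.mem_univ_pi, Set.mem_iInter, Finset.mem_image,
      Set.mem_preimage]
    constructor
    · rintro h m ⟨i, hi, rfl⟩
      rw [hBBeq i hi]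
      exact h ⟨i, hi⟩
    · intro h i
      have := h (n + (i : ℕ)) ⟨(i : ℕ), i.2, rfl⟩
      rwa [hBBeq _ i.2] at this
  rw [hpre]
  have hmeasBB : ∀ m, MeasurableSet (BB m) := by
    intro m
    simp only [hBB]
    split
    · exact hB _
    · exact MeasurableSet.univ
  rw [hindep.meas_biInter (fun m _ => ⟨BB m, hmeasBB m, rfl⟩)]
  rw [Finset.prod_image (fun a _ b _ h => by omega)]
  have hterm : ∀ i : ℕ, i ∈ s → ℙ (X (n + i) ⁻¹' BB (n + i))
      = Measure.map (X 0) ℙ (BB (n + i)) := by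
    intro i _
    rw [← Measure.map_apply (hmeas _) (hmeasBB _), (hident (n + i)).map_eq]
  rw [Finset.prod_congr rfl hterm, ← Finset.prod_coe_sort s
    (fun i => Measure.map (X 0) ℙ (BB (n + i)))]
  exact Finset.prod_congr rfl fun i _ => by rw [hBBeq _ i.2]

lemma rw_seq_law (hmeas : ∀ i, Measurable (X i))
    (hindep : iIndepFun X ℙ)
    (hident : ∀ i, IdentDistrib (X i) (X 0) ℙ ℙ) (n : ℕ) :
    Measure.map (fun ω (i : ℕ) => X (n + i) ω) ℙ
      = Measure.map (fun ω (i : ℕ) => X (0 + i) ω) ℙ := by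
  have hM : ∀ k, Measurable fun ω (i : ℕ) => X (k + i) ω := fun k =>
    measurable_pi_lambda _ fun i => hmeas _
  haveI h1 : IsProbabilityMeasure (Measure.map (fun ω (i : ℕ) => X (n + i) ω) ℙ) :=
    Measure.isProbabilityMeasure_map (hM n).aemeasurable
  haveI h2 : IsProbabilityMeasure (Measure.map (fun ω (i : ℕ) => X (0 + i) ω) ℙ) :=
    Measure.isProbabilityMeasure_map (hM 0).aemeasurable
  refine ext_of_generate_finite _ generateFrom_measurableCylinders.symm
    isPiSystem_measurableCylinders (fun t ht => ?_) (by rw [measure_univ, measure_univ])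
  obtain ⟨s, S, hS, rfl⟩ := (mem_measurableCylinders t).1 ht
  have hcyl : ∀ k, (fun ω (i : ℕ) => X (k + i) ω) ⁻¹' cylinder s S
      = (fun ω => fun i : s => X (k + (i : ℕ)) ω) ⁻¹' S := fun k => rfl
  rw [Measure.map_apply (hM n) (hS.cylinder s), Measure.map_apply (hM 0) (hS.cylinder s),
    hcyl, hcyl,
    ← Measure.map_apply (measurable_pi_lambda _ fun i => hmeas _) hS,
    ← Measure.map_apply (measurable_pi_lambda _ fun i => hmeas _) hS,
    rw_findim hmeas hindep hident n s, rw_findim hmeas hindep hident 0 s]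

end RWLaw

/-- Decomposition at the stopping time `τ_z`: for a random walk with i.i.d. increments of
mean `-a < 0`, `P(M > x) ≤ Σ_{j=0}^∞ P(M_{τ_z} > x + jz)` for all `x, z > 0`, where
`M = sup_{k≥0} S_k`, `τ_z = min{k ≥ 0 : S_k ≤ -z}` and `M_{τ_z} = max_{1 ≤ k ≤ τ_z} S_k`. -/
theorem stmt_0 {Ω : Type*} [MeasureSpace Ω] [IsProbabilityMeasure (ℙ : Measure Ω)]
    (X : ℕ → Ω → ℝ) (hmeas : ∀ i, Measurable (X i))
    (hindep : iIndepFun X ℙ)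
    (hident : ∀ i, IdentDistrib (X i) (X 0) ℙ ℙ)
    (hint : Integrable (X 0) ℙ)
    (a : ℝ) (ha : 0 < a) (hmean : ∫ ω, X 0 ω ∂ℙ = -a)
    (S : ℕ → Ω → ℝ) (hS : ∀ n ω, S n ω = ∑ i ∈ Finset.range n, X i ω)
    (z x : ℝ) (hz : 0 < z) (hx : 0 < x)
    (τ : Ω → ℕ) (hτ : ∀ ω, τ ω = sInf {k | S k ω ≤ -z})
    (hτfin : ∀ᵐ ω ∂ℙ, ∃ k, S k ω ≤ -z) :
    ℙ {ω | x < ⨆ k, S k ω} ≤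
      ∑' j : ℕ, ℙ {ω | x + (j : ℕ) * z < ⨆ k ∈ Finset.Icc 1 (τ ω), S k ω} := by
  classical
  have hc0 : ∀ j : ℕ, 0 ≤ x + (j : ℝ) * z := fun j => by positivity
  set A : ℕ → Set (ℕ → ℝ) := fun j => rwA z (x + (j : ℝ) * z) with hA
  have hA_meas : ∀ j, MeasurableSet (A j) := fun j => rw_measurableSet_A (hc0 j)
  set seqm : ℕ → Ω → (ℕ → ℝ) := fun n ω i => X (n + i) ω with hseqm
  have hseqm_meas : ∀ n, Measurable (seqm n) := fun n => measurable_pi_lambda _ fun i => hmeas _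
  set C : ℕ → ℕ → Set Ω := fun j n => seqm n ⁻¹' A j with hCdef
  set G : ℕ → ℕ → Set Ω := fun j n =>
    {ω | S n ω ≤ -(j : ℝ) * z} ∩ ⋂ m ∈ Set.Iio n, {ω | -(j : ℝ) * z < S m ω} with hGdef
  have hpsum : ∀ n ω m, rwPsum (seqm n ω) m = S (n + m) ω - S n ω := by
    intro n ω m
    simp only [rwPsum, hseqm]
    rw [hS, hS, Finset.sum_range_add]
    ring
  have hpsum0 : ∀ ω m, rwPsum (seqm 0 ω) m = S m ω := by
    intro ω m
    rw [hpsum]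
    have h0 : S 0 ω = 0 := by rw [hS]; simp
    rw [Nat.zero_add, h0]
    ring
  have hsigma0 : ∀ ω, rwSigma z (seqm 0 ω) = τ ω := by
    intro ω
    rw [hτ]
    unfold rwSigma
    congr 1
    ext k
    rw [Set.mem_setOf_eq, Set.mem_setOf_eq, hpsum0]
  have hBset : ∀ j : ℕ,
      {ω | x + (j : ℕ) * z < ⨆ k ∈ Finset.Icc 1 (τ ω), S k ω} = C j 0 := by
    intro j
    ext ω
    have he : (⨆ k ∈ Finset.Icc 1 (τ ω), S k ω)
        = ⨆ m ∈ Finset.Icc 1 (rwSigma z (seqm 0 ω)), rwPsum (seqm 0 ω) m := by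
      rw [hsigma0 ω]
      exact iSup_congr fun k => iSup_congr fun _ => (hpsum0 ω k).symm
    simp only [hCdef, hA, rwA, Set.mem_preimage, Set.mem_setOf_eq, he]
  have hS_measA : ∀ n m, m ≤ n →
      Measurable[⨆ i ∈ Set.Iio n, MeasurableSpace.comap (X i) inferInstance] (S m) := by
    intro n m hm
    have hSm : S m = fun ω => ∑ i ∈ Finset.range m, X i ω := funext fun ω => hS m ω
    rw [hSm]
    refine Finset.measurable_sum _ fun i hi => Measurable.of_comap_le ?_
    exact le_biSup (fun i => MeasurableSpace.comap (X i) inferInstance)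
      (Set.mem_Iio.2 (lt_of_lt_of_le (Finset.mem_range.1 hi) hm))
  have hG_measA : ∀ j n,
      MeasurableSet[⨆ i ∈ Set.Iio n, MeasurableSpace.comap (X i) inferInstance] (G j n) :=
    fun j n =>
    (measurableSet_le (hS_measA n n le_rfl) measurable_const).inter
      (MeasurableSet.biInter (Set.to_countable _) fun m hm =>
        measurableSet_lt measurable_const (hS_measA n m (le_of_lt hm)))
  have hC_measB : ∀ j n,
      MeasurableSet[⨆ i ∈ Set.Ici n, MeasurableSpace.comap (X i) inferInstance] (C j n) := by
    intro j n
    have hf : ∀ i : ℕ,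
        Measurable[⨆ i ∈ Set.Ici n, MeasurableSpace.comap (X i) inferInstance]
          (fun ω => seqm n ω i) := by
      intro i
      refine Measurable.of_comap_le ?_
      have heq : (fun ω => seqm n ω i) = X (n + i) := rfl
      rw [heq]
      exact le_biSup (fun i => MeasurableSpace.comap (X i) inferInstance)
        (Set.mem_Ici.2 (Nat.le_add_right n i))
    have hm : Measurable[⨆ i ∈ Set.Ici n, MeasurableSpace.comap (X i) inferInstance] (seqm n) := by
      refine Measurable.of_comap_le ?_
      rw [show (MeasurableSpace.pi : MeasurableSpace (ℕ → ℝ))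
          = ⨆ i : ℕ, MeasurableSpace.comap (fun b : ℕ → ℝ => b i) inferInstance from rfl,
        MeasurableSpace.comap_iSup]
      refine iSup_le fun i => ?_
      rw [MeasurableSpace.comap_comp]
      exact (hf i).comap_le
    exact hm (hA_meas j)
  have hIndep : ∀ n, Indep (⨆ i ∈ Set.Iio n, MeasurableSpace.comap (X i) inferInstance)
      (⨆ i ∈ Set.Ici n, MeasurableSpace.comap (X i) inferInstance) ℙ := fun n =>
    indep_iSup_of_disjoint (fun i => (hmeas i).comap_le) hindep.iIndep
      (Set.Iio_disjoint_Ici le_rfl)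
  have hprod : ∀ j n, ℙ (G j n ∩ C j n) = ℙ (G j n) * ℙ (C j n) := fun j n =>
    (Indep_iff _ _ _).1 (hIndep n) _ _ (hG_measA j n) (hC_measB j n)
  have hCval : ∀ j n, ℙ (C j n) = ℙ (C j 0) := by
    intro j n
    have h0 : seqm 0 = fun ω (i : ℕ) => X (0 + i) ω := rfl
    calc ℙ (C j n) = Measure.map (seqm n) ℙ (A j) :=
          (Measure.map_apply (hseqm_meas n) (hA_meas j)).symm
      _ = Measure.map (seqm 0) ℙ (A j) := by
          rw [show seqm n = fun ω (i : ℕ) => X (n + i) ω from rfl,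
            rw_seq_law hmeas hindep hident n, ← h0]
      _ = ℙ (C j 0) := Measure.map_apply (hseqm_meas 0) (hA_meas j)
  have hmA_le : ∀ n : ℕ,
      (⨆ i ∈ Set.Iio n, MeasurableSpace.comap (X i) inferInstance)
        ≤ (inferInstance : MeasurableSpace Ω) :=
    fun n => iSup₂_le fun i _ => (hmeas i).comap_le
  have hG_meas : ∀ j n, MeasurableSet (G j n) := fun j n => hmA_le n _ (hG_measA j n)
  have hG_disj : ∀ j, Pairwise (Function.onFun Disjoint (G j)) := by
    intro j
    have key : ∀ {n n' : ℕ}, n < n' → Disjoint (G j n) (G j n') := by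
      intro n n' hlt
      rw [Set.disjoint_left]
      rintro ω ⟨h1, -⟩ ⟨-, h2⟩
      have h1' : S n ω ≤ -(j : ℝ) * z := h1
      have h3 : -(j : ℝ) * z < S n ω := Set.mem_iInter₂.1 h2 n (Set.mem_Iio.2 hlt)
      linarith
    intro n n' hne
    rcases hne.lt_or_gt with h | h
    · exact key h
    · exact (key h).symm
  have hGsum : ∀ j, ∑' n, ℙ (G j n) ≤ 1 := by
    intro j
    rw [← measure_iUnion (hG_disj j) (hG_meas j)]
    exact prob_le_one
  have hpairind : Pairwise (Function.onFun (IndepFun · · ℙ) X) := fun i j hij => hindep.indepFun hij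
  have hae : ∀ᵐ ω ∂ℙ, ∀ (r : ℝ) (N : ℕ), ∃ m, N ≤ m ∧ S m ω ≤ r := by
    filter_upwards [ProbabilityTheory.strong_law_ae X hint hpairind hident] with ω hω r N
    rw [hmean] at hω
    have h2 := hω.eventually_lt_const (show -a < -a / 2 by linarith)
    obtain ⟨N₀, hN₀⟩ := Filter.eventually_atTop.1 h2
    obtain ⟨q, hq⟩ := exists_nat_ge ((-r) / (a / 2))
    set m := max (max N₀ N) (max q 1) with hm
    refine ⟨m, le_trans (le_max_right N₀ N) (le_max_left _ _), ?_⟩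
    have hm1 : 1 ≤ m := le_trans (le_max_right q 1) (le_max_right _ _)
    have hmpos : (0 : ℝ) < m := by exact_mod_cast hm1
    have h3 : (m : ℝ)⁻¹ * (∑ i ∈ Finset.range m, X i ω) < -a / 2 := by
      have h3' := hN₀ m (le_trans (le_max_left N₀ N) (le_max_left _ _))
      rwa [smul_eq_mul] at h3'
    have h4 : (∑ i ∈ Finset.range m, X i ω) < -a / 2 * m := by
      have h5 := mul_lt_mul_of_pos_left h3 hmpos
      rwa [← mul_assoc, mul_inv_cancel₀ (ne_of_gt hmpos), one_mul, mul_comm ((m : ℝ))] at h5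
    have hqm : (q : ℝ) ≤ m := by
      exact_mod_cast le_trans (le_max_left q 1) (le_max_right _ _)
    have h6 : -r ≤ a / 2 * m := by
      have h7 : (-r) / (a / 2) ≤ (m : ℝ) := le_trans hq hqm
      have h8 : 0 < a / 2 := by linarith
      calc -r = (-r) / (a / 2) * (a / 2) := by field_simp
        _ ≤ (m : ℝ) * (a / 2) := mul_le_mul_of_nonneg_right h7 (le_of_lt h8)
        _ = a / 2 * m := mul_comm _ _
    rw [hS]
    linarith
  have hpath : ∀ᵐ ω ∂ℙ, ω ∈ {ω | x < ⨆ k, S k ω} →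
      ω ∈ ⋃ (j : ℕ) (n : ℕ), G j n ∩ C j n := by
    filter_upwards [hae] with ω hω hmem
    have hmem' : x < ⨆ k, S k ω := hmem
    have hk' : ∃ k, x < S k ω := by
      by_contra hcon
      push_neg at hcon
      exact absurd hmem' (not_lt.2 (ciSup_le hcon))
    obtain ⟨k, hk⟩ := hk'
    have hS0 : S 0 ω = 0 := by rw [hS]; simp
    have hk1 : 1 ≤ k := by
      rcases Nat.eq_zero_or_pos k with rfl | h
      · rw [hS0] at hk; linarith
      · exact h
    set F : ℕ → ℕ := fun j => sInf {m | S m ω ≤ -(j : ℝ) * z} with hF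
    have hne : ∀ j : ℕ, {m | S m ω ≤ -(j : ℝ) * z}.Nonempty := by
      intro j
      obtain ⟨m, -, hm⟩ := hω (-(j : ℝ) * z) 0
      exact ⟨m, hm⟩
    have hFmem : ∀ j, S (F j) ω ≤ -(j : ℝ) * z := fun j => Nat.sInf_mem (hne j)
    have hFmin : ∀ j m, m < F j → -(j : ℝ) * z < S m ω := fun j m hm =>
      not_le.1 (Nat.notMem_of_lt_sInf hm)
    have hex : ∃ j : ℕ, k ≤ F (j + 1) := by
      have hkpos : (Finset.range k).Nonempty := Finset.nonempty_range_iff.2 (by omega)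
      set Cm : ℝ := (Finset.range k).sup' hkpos (fun m => -S m ω) with hCm
      obtain ⟨j, hj⟩ := exists_nat_gt (Cm / z)
      refine ⟨j, ?_⟩
      by_contra hcon
      push_neg at hcon
      have h1 : -S (F (j + 1)) ω ≤ Cm := by
        rw [hCm]
        exact Finset.le_sup' (fun m => -S m ω) (Finset.mem_range.2 hcon)
      have h2 : Cm < (j : ℝ) * z := by
        rw [div_lt_iff₀ hz] at hj
        exact hj
      have h3 := hFmem (j + 1)
      push_cast at h3
      linarith
    set j₀ := Nat.find hex with hj₀
    have hkF : k ≤ F (j₀ + 1) := Nat.find_spec hex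
    set n := F j₀ with hn
    have hnk : n < k := by
      rcases Nat.eq_zero_or_pos j₀ with hj0 | hpos
      · have hF0 : F 0 = 0 := by
          refine le_antisymm (Nat.sInf_le ?_) (Nat.zero_le _)
          rw [Set.mem_setOf_eq, hS0]
          simp
        rw [hn, hj0, hF0]
        omega
      · have hlt := Nat.find_min hex (show j₀ - 1 < j₀ by omega)
        push_neg at hlt
        have heq : j₀ - 1 + 1 = j₀ := by omega
        rw [heq] at hlt
        exact hlt
    have hGmem : ω ∈ G j₀ n :=
      ⟨hFmem j₀, Set.mem_iInter₂.2 fun m hm => hFmin j₀ m (Set.mem_Iio.1 hm)⟩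
    have hσne : {m | rwPsum (seqm n ω) m ≤ -z}.Nonempty := by
      obtain ⟨m', hm', hle⟩ := hω (S n ω - z) n
      refine ⟨m' - n, ?_⟩
      rw [Set.mem_setOf_eq, hpsum, show n + (m' - n) = m' by omega]
      linarith
    have hlow : ∀ m ∈ {m | rwPsum (seqm n ω) m ≤ -z}, k - n ≤ m := by
      intro m hm
      rw [Set.mem_setOf_eq, hpsum] at hm
      have h1 : S (n + m) ω ≤ -((j₀ : ℝ) + 1) * z := by
        have h1' := hFmem j₀
        nlinarith [hz]
      have h2 : F (j₀ + 1) ≤ n + m := by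
        apply Nat.sInf_le
        rw [Set.mem_setOf_eq]
        push_cast
        linarith
      omega
    have hm₀σ : k - n ≤ rwSigma z (seqm n ω) := hlow _ (Nat.sInf_mem hσne)
    have hval : x + (j₀ : ℝ) * z < rwPsum (seqm n ω) (k - n) := by
      rw [hpsum, show n + (k - n) = k by omega]
      have h1 := hFmem j₀
      linarith
    have hCmem : ω ∈ C j₀ n :=
      rw_lt_biSup (Finset.mem_Icc.2 ⟨by omega, hm₀σ⟩) hval
    exact Set.mem_iUnion.2 ⟨j₀, Set.mem_iUnion.2 ⟨n, hGmem, hCmem⟩⟩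
  calc ℙ {ω | x < ⨆ k, S k ω} ≤ ℙ (⋃ (j : ℕ) (n : ℕ), G j n ∩ C j n) :=
        measure_mono_ae hpath
    _ ≤ ∑' j : ℕ, ℙ (⋃ n : ℕ, G j n ∩ C j n) := measure_iUnion_le _
    _ ≤ ∑' j : ℕ, ∑' n : ℕ, ℙ (G j n ∩ C j n) :=
        ENNReal.tsum_le_tsum fun j => measure_iUnion_le _
    _ = ∑' j : ℕ, ∑' n : ℕ, ℙ (G j n) * ℙ (C j 0) := by
        refine tsum_congr fun j => tsum_congr fun n => ?_
        rw [hprod, hCval]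
    _ = ∑' j : ℕ, (∑' n : ℕ, ℙ (G j n)) * ℙ (C j 0) := by
        refine tsum_congr fun j => ?_
        rw [ENNReal.tsum_mul_right]
    _ ≤ ∑' j : ℕ, 1 * ℙ (C j 0) :=
        ENNReal.tsum_le_tsum fun j => mul_le_mul_left (hGsum j) _
    _ = ∑' j : ℕ, ℙ (C j 0) := by simp
    _ = ∑' j : ℕ, ℙ {ω | x + (j : ℕ) * z < ⨆ k ∈ Finset.Icc 1 (τ ω), S k ω} := by
        refine tsum_congr fun j => ?_
        rw [hBset j]
end

section
/- Let X be a random variable with E[|X|^t] = A_t < ∞ for some t ∈ (1, 2]. Then for all h > 0 and y > 0: E[e^{hX} 1_{X ≤ y}] ≤ 1 + h E[X 1_{|X| ≤ y}] + A_t (e^{hy} - 1 - hy)/y^t. -/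
open MeasureTheory ProbabilityTheory


lemma exp_le_quad {x : ℝ} (hx : x ≤ 0) : Real.exp x ≤ 1 + x + x ^ 2 / 2 := by
  have h1 : 1 + (-x) + (-x) ^ 2 / 2 ≤ Real.exp (-x) := Real.quadratic_le_exp_of_nonneg (by linarith)
  have h2 : Real.exp x * Real.exp (-x) = 1 := by rw [← Real.exp_add]; simp
  have h3 : (0:ℝ) < 1 + x + x ^ 2 / 2 := by nlinarith [sq_nonneg (x + 1)]
  nlinarith [Real.exp_pos x, sq_nonneg (x^2)]

lemma psi_nonneg {x : ℝ} (hx : 0 ≤ x) : 0 ≤ Real.exp x * (x - 2) + x + 2 := by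
  set ψ : ℝ → ℝ := fun x => Real.exp x * (x - 2) + (x + 2) with hψ
  have hd : ∀ z : ℝ, HasDerivAt ψ (Real.exp z * (z - 1) + 1) z := by
    intro z
    have : HasDerivAt ψ (Real.exp z * (z - 2) + Real.exp z * 1 + 1) z :=
      (((Real.hasDerivAt_exp z).mul ((hasDerivAt_id' z).sub_const 2)).add
        ((hasDerivAt_id' z).add_const 2))
    convert this using 1; ring
  have hmono : MonotoneOn ψ (Set.Ici 0) :=
    monotoneOn_of_deriv_nonneg (convex_Ici 0)
      (fun z _ => (hd z).continuousAt.continuousWithinAt)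
      (fun z _ => (hd z).differentiableAt.differentiableWithinAt)
      (by
        intro z hz
        rw [interior_Ici] at hz
        rw [(hd z).deriv]
        have hz' : (0:ℝ) < z := hz
        have h1 := Real.add_one_le_exp (-z)
        have h2 : Real.exp z * Real.exp (-z) = 1 := by rw [← Real.exp_add]; simp
        nlinarith [Real.exp_pos z])
  have h0 : ψ 0 = 0 := by simp [hψ]
  have := hmono Set.self_mem_Ici hx hx
  rw [h0] at this
  simp only [hψ] at this
  linarith [this]

lemma g_mono {u v : ℝ} (hu : 0 < u) (huv : u ≤ v) :
    (Real.exp u - 1 - u) * v ^ 2 ≤ (Real.exp v - 1 - v) * u ^ 2 := by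
  set g : ℝ → ℝ := fun x => (Real.exp x - 1 - x) / x ^ 2 with hg
  have hd : ∀ z : ℝ, 0 < z → HasDerivAt g
      (((Real.exp z - 1) * z ^ 2 - (Real.exp z - 1 - z) * (2 * z)) / (z ^ 2) ^ 2) z := by
    intro z hz
    have hN : HasDerivAt (fun x : ℝ => Real.exp x - 1 - x) (Real.exp z - 1) z :=
      ((Real.hasDerivAt_exp z).sub_const 1).sub (hasDerivAt_id' z)
    have hD : HasDerivAt (fun x : ℝ => x ^ 2) (2 * z) z := by
      simpa using (hasDerivAt_pow 2 z)
    exact hN.div hD (by positivity)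
  have hmono : MonotoneOn g (Set.Ioi 0) :=
    monotoneOn_of_deriv_nonneg (convex_Ioi 0)
      (fun z hz => ((hd z hz).continuousAt.continuousWithinAt))
      (fun z hz => by rw [interior_Ioi] at hz; exact (hd z hz).differentiableAt.differentiableWithinAt)
      (by
        intro z hz
        rw [interior_Ioi] at hz
        rw [(hd z hz).deriv]
        apply div_nonneg _ (by positivity)
        have hψ := psi_nonneg (le_of_lt hz)
        nlinarith [mul_nonneg hψ (le_of_lt hz)])
  have hv : 0 < v := lt_of_lt_of_le hu huv
  have := hmono (Set.mem_Ioi.2 hu) (Set.mem_Ioi.2 hv) huv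
  rw [hg] at this
  simp only at this
  rw [div_le_div_iff₀ (by positivity) (by positivity)] at this
  linarith

lemma key_ineq {u v : ℝ} (huv : u ≤ v) (hv : 0 < v) :
    (Real.exp u - 1 - u) * v ^ 2 ≤ (Real.exp v - 1 - v) * u ^ 2 := by
  rcases lt_trichotomy u 0 with h | h | h
  · have h1 : Real.exp u - 1 - u ≤ u ^ 2 / 2 := by linarith [exp_le_quad h.le]
    have h2 : v ^ 2 / 2 ≤ Real.exp v - 1 - v := by
      linarith [Real.quadratic_le_exp_of_nonneg hv.le]
    calc (Real.exp u - 1 - u) * v ^ 2 ≤ (u ^ 2 / 2) * v ^ 2 := by nlinarith [sq_nonneg v]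
      _ = (v ^ 2 / 2) * u ^ 2 := by ring
      _ ≤ (Real.exp v - 1 - v) * u ^ 2 := by nlinarith [sq_nonneg u]
  · rw [h]; simp
  · exact g_mono h huv


lemma pointwise_bound {t h y x : ℝ} (ht1 : 1 < t) (ht2 : t ≤ 2) (hh : 0 < h) (hy : 0 < y)
    (hxy : x ≤ y) (hax : |x| ≤ y) :
    Real.exp (h * x) ≤ 1 + h * x + |x| ^ t * ((Real.exp (h * y) - 1 - h * y) / y ^ t) := by
  set B := Real.exp (h * y) - 1 - h * y with hB
  have hfy : 0 ≤ B := by nlinarith [Real.add_one_le_exp (h * y)]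
  have key := key_ineq (mul_le_mul_of_nonneg_left hxy hh.le) (mul_pos hh hy)
  have step1 : Real.exp (h * x) - 1 - h * x ≤ B * (x ^ 2 / y ^ 2) := by
    rw [show B * (x ^ 2 / y ^ 2) = B * x ^ 2 / y ^ 2 by ring, le_div_iff₀ (by positivity)]
    have hh2 : (0 : ℝ) < h ^ 2 := by positivity
    have key' : (Real.exp (h * x) - 1 - h * x) * y ^ 2 * h ^ 2 ≤ B * x ^ 2 * h ^ 2 := by
      nlinarith [key]
    exact le_of_mul_le_mul_right key' hh2
  have step2 : x ^ 2 / y ^ 2 ≤ |x| ^ t / y ^ t := by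
    have e1 : x ^ 2 / y ^ 2 = (|x| / y) ^ ((2 : ℕ) : ℝ) := by
      rw [Real.rpow_natCast, div_pow, sq_abs]
    have e2 : |x| ^ t / y ^ t = (|x| / y) ^ t := (Real.div_rpow (abs_nonneg x) hy.le t).symm
    rw [e1, e2]
    rcases eq_or_ne x 0 with h0 | h0
    · simp [h0, Real.zero_rpow (by linarith : t ≠ 0)]
    · exact Real.rpow_le_rpow_of_exponent_ge (by positivity) (by
        rw [div_le_one hy]; exact hax) (by exact_mod_cast ht2)
  have step3 : B * (x ^ 2 / y ^ 2) ≤ B * (|x| ^ t / y ^ t) :=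
    mul_le_mul_of_nonneg_left step2 hfy
  have : |x| ^ t * (B / y ^ t) = B * (|x| ^ t / y ^ t) := by ring
  linarith [step1, step3, this.ge]

lemma pointwise_bound2 {t h y x : ℝ} (ht1 : 1 < t) (ht2 : t ≤ 2) (hh : 0 < h) (hy : 0 < y)
    (hxy : x ≤ y) :
    Real.exp (h * x) ≤ 1 + h * (if |x| ≤ y then x else 0) +
      |x| ^ t * ((Real.exp (h * y) - 1 - h * y) / y ^ t) := by
  have hfy : 0 ≤ Real.exp (h * y) - 1 - h * y := by nlinarith [Real.add_one_le_exp (h * y)]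
  have hC : 0 ≤ (Real.exp (h * y) - 1 - h * y) / y ^ t :=
    div_nonneg hfy (Real.rpow_pos_of_pos hy t).le
  by_cases hax : |x| ≤ y
  · rw [if_pos hax]; exact pointwise_bound ht1 ht2 hh hy hxy hax
  · rw [if_neg hax]
    have hx0 : x ≤ 0 := by
      rcases abs_cases x with ⟨h1, _⟩ | ⟨h1, h2⟩
      · linarith [not_le.1 hax]
      · linarith
    have : Real.exp (h * x) ≤ 1 := by
      rw [← Real.exp_zero]
      exact Real.exp_le_exp.2 (by nlinarith)
    have : 0 ≤ |x| ^ t * ((Real.exp (h * y) - 1 - h * y) / y ^ t) :=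
      mul_nonneg (Real.rpow_nonneg (abs_nonneg x) t) hC
    linarith


/-- Fuk–Nagaev truncated exponential moment bound: if `E[|X|^t] = A_t < ∞` for
`t ∈ (1,2]`, then for all `h > 0`, `y > 0`:
`E[e^{hX} 1_{X ≤ y}] ≤ 1 + h E[X 1_{|X| ≤ y}] + A_t (e^{hy} - 1 - hy)/y^t`. -/
theorem stmt_3 {Ω : Type*} [MeasureSpace Ω] [IsProbabilityMeasure (ℙ : Measure Ω)]
    (X : Ω → ℝ) (hX : Measurable X) (hint : Integrable X ℙ)
    (t : ℝ) (ht1 : 1 < t) (ht2 : t ≤ 2)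
    (At : ℝ) (hAt : ∫ ω, |X ω| ^ t ∂ℙ = At)
    (hintt : Integrable (fun ω => |X ω| ^ t) ℙ)
    (h y : ℝ) (hh : 0 < h) (hy : 0 < y) :
    (∫ ω in {ω | X ω ≤ y}, Real.exp (h * X ω) ∂ℙ) ≤
      1 + h * (∫ ω in {ω | |X ω| ≤ y}, X ω ∂ℙ) +
        At * (Real.exp (h * y) - 1 - h * y) / y ^ t := by
  set C : ℝ := (Real.exp (h * y) - 1 - h * y) / y ^ t with hC
  set S : Set Ω := {ω | X ω ≤ y} with hS
  set T : Set Ω := {ω | |X ω| ≤ y} with hT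
  have hSm : MeasurableSet S := measurableSet_le hX measurable_const
  have hTm : MeasurableSet T := measurableSet_le hX.abs measurable_const
  have hTS : T ⊆ S := fun ω hω => le_trans (le_abs_self (X ω)) hω
  have hfy : 0 ≤ Real.exp (h * y) - 1 - h * y := by nlinarith [Real.add_one_le_exp (h * y)]
  have hC0 : 0 ≤ C := div_nonneg hfy (Real.rpow_pos_of_pos hy t).le
  set g : Ω → ℝ := fun ω => 1 + h * T.indicator X ω + C * |X ω| ^ t with hg
  have hi1 : Integrable (fun ω => h * T.indicator X ω) ℙ := (hint.indicator hTm).const_mul h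
  have hi2 : Integrable (fun ω => C * |X ω| ^ t) ℙ := hintt.const_mul C
  have hgInt : Integrable g ℙ := ((integrable_const 1).add hi1).add hi2
  have hpt : ∀ ω ∈ S, Real.exp (h * X ω) ≤ g ω := by
    intro ω hω
    have hb := pointwise_bound2 (x := X ω) ht1 ht2 hh hy hω
    have hind : T.indicator X ω = if |X ω| ≤ y then X ω else 0 := by
      by_cases hm : |X ω| ≤ y
      · rw [Set.indicator_of_mem (show ω ∈ T from hm), if_pos hm]
      · rw [Set.indicator_of_notMem (show ω ∉ T from hm), if_neg hm]
    rw [hg]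
    simp only
    rw [hind]
    calc Real.exp (h * X ω) ≤ 1 + h * (if |X ω| ≤ y then X ω else 0) + |X ω| ^ t * C := hb
      _ = 1 + h * (if |X ω| ≤ y then X ω else 0) + C * |X ω| ^ t := by ring
  have hexpInt : IntegrableOn (fun ω => Real.exp (h * X ω)) S ℙ := by
    apply Integrable.mono' hgInt.integrableOn ((hX.const_mul h).exp).aestronglyMeasurable
    filter_upwards [ae_restrict_mem hSm] with ω hω
    rw [Real.norm_eq_abs, abs_of_nonneg (Real.exp_pos _).le]
    exact hpt ω hω
  have step1 : (∫ ω in S, Real.exp (h * X ω) ∂ℙ) ≤ ∫ ω in S, g ω ∂ℙ :=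
    setIntegral_mono_on hexpInt hgInt.integrableOn hSm hpt
  have split : (∫ ω in S, g ω ∂ℙ) =
      (ℙ S).toReal + h * (∫ ω in S, T.indicator X ω ∂ℙ) + C * ∫ ω in S, |X ω| ^ t ∂ℙ := by
    have hiA : Integrable (fun ω => 1 + h * T.indicator X ω) ℙ := (integrable_const 1).add hi1
    simp only [hg]
    rw [integral_add hiA.integrableOn hi2.integrableOn,
        integral_add ((integrable_const (1:ℝ)).integrableOn) hi1.integrableOn,
        integral_const, MeasureTheory.integral_const_mul, MeasureTheory.integral_const_mul]
    simp [smul_eq_mul, measureReal_def]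
  have b1 : (ℙ S).toReal ≤ 1 := by
    have h1 : ℙ S ≤ 1 := prob_le_one
    calc (ℙ S).toReal ≤ (1 : ENNReal).toReal := ENNReal.toReal_mono ENNReal.one_ne_top h1
      _ = 1 := by simp
  have b2 : (∫ ω in S, T.indicator X ω ∂ℙ) = ∫ ω in T, X ω ∂ℙ := by
    rw [setIntegral_indicator hTm, Set.inter_eq_self_of_subset_right hTS]
  have b3 : (∫ ω in S, |X ω| ^ t ∂ℙ) ≤ At := by
    rw [← hAt]
    exact setIntegral_le_integral hintt
      (Filter.Eventually.of_forall fun ω => Real.rpow_nonneg (abs_nonneg _) t)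
  have final : (ℙ S).toReal + h * (∫ ω in S, T.indicator X ω ∂ℙ) + C * ∫ ω in S, |X ω| ^ t ∂ℙ
      ≤ 1 + h * (∫ ω in T, X ω ∂ℙ) + At * (Real.exp (h * y) - 1 - h * y) / y ^ t := by
    rw [b2]
    have : C * (∫ ω in S, |X ω| ^ t ∂ℙ) ≤ C * At := mul_le_mul_of_nonneg_left b3 hC0
    have hCAt : C * At = At * (Real.exp (h * y) - 1 - h * y) / y ^ t := by rw [hC]; ring
    linarith
  calc (∫ ω in S, Real.exp (h * X ω) ∂ℙ) ≤ ∫ ω in S, g ω ∂ℙ := step1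
    _ = _ := split
    _ ≤ _ := final
end

section
/- Let V be a nonnegative random variable with E[V^t] < ∞ for some t ∈ (1, 2]. Then for every z > 0: ∫_0^∞ ∫_u^{u+z} P(V > v) dv du ≤ z^{2-t} E[V^t] / t. -/
open MeasureTheory ProbabilityTheory

/-- For a nonnegative random variable `V` with `E[V^t] < ∞`, `t ∈ (1,2]`, and `z > 0`:
`∫_0^∞ ∫_u^{u+z} P(V > v) dv du ≤ z^{2-t} E[V^t] / t`. -/
theorem stmt_11 {Ω : Type*} [MeasureSpace Ω] [IsProbabilityMeasure (ℙ : Measure Ω)]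
    (V : Ω → ℝ) (hV : Measurable V) (hV0 : ∀ ω, 0 ≤ V ω)
    (t : ℝ) (ht1 : 1 < t) (ht2 : t ≤ 2)
    (hint : Integrable (fun ω => V ω ^ t) ℙ)
    (z : ℝ) (hz : 0 < z) :
    (∫ u in Set.Ioi (0 : ℝ),
        ∫ v in Set.Ioc u (u + z), ((ℙ : Measure Ω) {ω | v < V ω}).toReal) ≤
      z ^ (2 - t) * (∫ ω, V ω ^ t ∂ℙ) / t := by
  set f : ℝ → ENNReal := fun v => (ℙ : Measure Ω) {ω | v < V ω} with hf_def
  have hf_anti : Antitone f := fun a b hab =>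
    measure_mono fun ω hb => lt_of_le_of_lt hab hb
  have hf_m : Measurable f := hf_anti.measurable
  have hf_le : ∀ v, f v ≤ 1 := fun v => prob_le_one
  -- the product-space integrand
  set S : Set (ℝ × ℝ) := {p : ℝ × ℝ | p.1 < p.2 ∧ p.2 ≤ p.1 + z} with hS_def
  have hS : MeasurableSet S :=
    (measurableSet_lt measurable_fst measurable_snd).inter
      (measurableSet_le measurable_snd (measurable_fst.add_const z))
  set h : ℝ × ℝ → ENNReal := S.indicator (fun p => f p.2) with hh_def
  have hh_m : Measurable h := (hf_m.comp measurable_snd).indicator hS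
  set g : ℝ → ENNReal := fun u => ∫⁻ v in Set.Ioc u (u + z), f v with hg_def
  have hgh : ∀ u, g u = ∫⁻ v, h (u, v) := by
    intro u
    show (∫⁻ v in Set.Ioc u (u + z), f v) = _
    rw [← lintegral_indicator measurableSet_Ioc]
    refine lintegral_congr fun v => ?_
    show _ = S.indicator (fun p => f p.2) (u, v)
    by_cases hv : u < v ∧ v ≤ u + z
    · rw [Set.indicator_of_mem (Set.mem_Ioc.2 hv),
        Set.indicator_of_mem (show (u, v) ∈ S from hv)]
    · rw [Set.indicator_of_notMem (fun hm => hv (Set.mem_Ioc.1 hm)),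
        Set.indicator_of_notMem (show (u, v) ∉ S from fun hm => hv hm)]
  have hg_m : Measurable g := by
    rw [show g = fun u => ∫⁻ v, h (u, v) from funext hgh]
    exact hh_m.lintegral_prod_right'
  have hg_fin : ∀ u, g u < ⊤ := by
    intro u
    calc g u ≤ ∫⁻ _ in Set.Ioc u (u + z), 1 := lintegral_mono fun v => hf_le v
      _ = volume (Set.Ioc u (u + z)) := by
          rw [setLIntegral_const, one_mul]
      _ < ⊤ := by rw [Real.volume_Ioc]; exact ENNReal.ofReal_lt_top
  -- rewrite LHS as toReal of a double lintegral
  have hinner : ∀ u, (∫ v in Set.Ioc u (u + z), (f v).toReal) = (g u).toReal := by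
    intro u
    exact integral_toReal hf_m.aemeasurable
      (ae_of_all _ fun v => lt_of_le_of_lt (hf_le v) ENNReal.one_lt_top)
  have hLHS : (∫ u in Set.Ioi (0 : ℝ),
      ∫ v in Set.Ioc u (u + z), ((ℙ : Measure Ω) {ω | v < V ω}).toReal)
      = (∫⁻ u in Set.Ioi (0 : ℝ), g u).toReal := by
    have : (∫ u in Set.Ioi (0 : ℝ),
        ∫ v in Set.Ioc u (u + z), ((ℙ : Measure Ω) {ω | v < V ω}).toReal)
        = ∫ u in Set.Ioi (0 : ℝ), (g u).toReal := by
      refine integral_congr_ae (ae_of_all _ fun u => ?_)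
      exact hinner u
    rw [this]
    exact integral_toReal hg_m.aemeasurable (ae_of_all _ fun u => hg_fin u)
  -- Tonelli swap
  have hswap : (∫⁻ u in Set.Ioi (0 : ℝ), g u)
      = ∫⁻ v, ∫⁻ u in Set.Ioi (0 : ℝ), h (u, v) := by
    have : (∫⁻ u in Set.Ioi (0 : ℝ), g u)
        = ∫⁻ u in Set.Ioi (0 : ℝ), ∫⁻ v, h (u, v) := by
      exact lintegral_congr hgh
    rw [this]
    exact lintegral_lintegral_swap hh_m.aemeasurable
  -- pointwise bound for the inner integral over u
  have hmin : ∀ v : ℝ, 0 < v → min v z ≤ z ^ (2 - t) * v ^ (t - 1) := by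
    intro v hv
    rcases le_total v z with hvz | hvz
    · have h1 : v ^ (2 - t) * v ^ (t - 1) = v := by
        rw [← Real.rpow_add hv, show (2 - t) + (t - 1) = 1 by ring, Real.rpow_one]
      calc min v z = v := min_eq_left hvz
        _ = v ^ (2 - t) * v ^ (t - 1) := h1.symm
        _ ≤ z ^ (2 - t) * v ^ (t - 1) :=
            mul_le_mul_of_nonneg_right
              (Real.rpow_le_rpow hv.le hvz (by linarith)) (Real.rpow_nonneg hv.le _)
    · have h1 : z ^ (2 - t) * z ^ (t - 1) = z := by
        rw [← Real.rpow_add hz, show (2 - t) + (t - 1) = 1 by ring, Real.rpow_one]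
      calc min v z = z := min_eq_right hvz
        _ = z ^ (2 - t) * z ^ (t - 1) := h1.symm
        _ ≤ z ^ (2 - t) * v ^ (t - 1) :=
            mul_le_mul_of_nonneg_left
              (Real.rpow_le_rpow hz.le hvz (by linarith)) (Real.rpow_nonneg hz.le _)
  have hkey : ∀ v : ℝ, (∫⁻ u in Set.Ioi (0 : ℝ), h (u, v))
      ≤ (Set.Ioi (0:ℝ)).indicator
          (fun v => f v * ENNReal.ofReal (z ^ (2 - t) * v ^ (t - 1))) v := by
    intro v
    by_cases hv : 0 < v
    · rw [Set.indicator_of_mem (Set.mem_Ioi.2 hv)]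
      have hrw : (∫⁻ u in Set.Ioi (0 : ℝ), h (u, v))
          = ∫⁻ u in Set.Ioi (0 : ℝ), (Set.Ico (v - z) v).indicator (fun _ => f v) u := by
        refine lintegral_congr fun u => ?_
        show S.indicator (fun p => f p.2) (u, v) = _
        by_cases hu : v - z ≤ u ∧ u < v
        · rw [Set.indicator_of_mem (show (u, v) ∈ S from ⟨hu.2, by linarith [hu.1]⟩),
            Set.indicator_of_mem (Set.mem_Ico.2 hu)]
        · rw [Set.indicator_of_notMem
              (show (u, v) ∉ S from fun hmem => hu ⟨by linarith [hmem.2], hmem.1⟩),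
            Set.indicator_of_notMem (fun hmem => hu (Set.mem_Ico.1 hmem))]
      rw [hrw, lintegral_indicator measurableSet_Ico, setLIntegral_const,
        Measure.restrict_apply measurableSet_Ico]
      have hvol : volume (Set.Ico (v - z) v ∩ Set.Ioi 0) ≤ ENNReal.ofReal (min v z) := by
        rcases le_total v z with hvz | hvz
        · have hsub : Set.Ico (v - z) v ∩ Set.Ioi 0 ⊆ Set.Ioo 0 v := by
            rintro u ⟨⟨_, hu2⟩, hu3⟩; exact ⟨hu3, hu2⟩
          calc volume (Set.Ico (v - z) v ∩ Set.Ioi 0) ≤ volume (Set.Ioo 0 v) :=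
                measure_mono hsub
            _ = ENNReal.ofReal v := by rw [Real.volume_Ioo, sub_zero]
            _ = ENNReal.ofReal (min v z) := by rw [min_eq_left hvz]
        · calc volume (Set.Ico (v - z) v ∩ Set.Ioi 0) ≤ volume (Set.Ico (v - z) v) :=
                measure_mono Set.inter_subset_left
            _ = ENNReal.ofReal z := by rw [Real.volume_Ico, sub_sub_cancel]
            _ = ENNReal.ofReal (min v z) := by rw [min_eq_right hvz]
      calc f v * volume (Set.Ico (v - z) v ∩ Set.Ioi 0)
          ≤ f v * ENNReal.ofReal (min v z) := mul_le_mul_right hvol _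
        _ ≤ f v * ENNReal.ofReal (z ^ (2 - t) * v ^ (t - 1)) :=
            mul_le_mul_right (ENNReal.ofReal_le_ofReal (hmin v hv)) _
    · rw [Set.indicator_of_notMem (fun hmem => hv (Set.mem_Ioi.1 hmem))]
      have : (∫⁻ u in Set.Ioi (0 : ℝ), h (u, v)) = ∫⁻ _ in Set.Ioi (0 : ℝ), 0 := by
        refine setLIntegral_congr_fun measurableSet_Ioi (fun u hu => ?_)
        show S.indicator (fun p => f p.2) (u, v) = 0
        refine Set.indicator_of_notMem (fun hmem => ?_) _
        have h1 : u < v := hmem.1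
        have h2 : (0:ℝ) < u := hu
        have h3 : v ≤ 0 := not_lt.1 hv
        linarith
      rw [this, lintegral_zero]
  -- assemble the bound on the double lintegral
  set L : ENNReal := ∫⁻ ω, ENNReal.ofReal (V ω ^ t / t) ∂ℙ with hL_def
  have hTle : (∫⁻ u in Set.Ioi (0 : ℝ), g u)
      ≤ ENNReal.ofReal (z ^ (2 - t)) * ∫⁻ v in Set.Ioi (0:ℝ), f v * ENNReal.ofReal (v ^ (t - 1)) := by
    rw [hswap]
    calc (∫⁻ v, ∫⁻ u in Set.Ioi (0 : ℝ), h (u, v))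
        ≤ ∫⁻ v, (Set.Ioi (0:ℝ)).indicator
            (fun v => f v * ENNReal.ofReal (z ^ (2 - t) * v ^ (t - 1))) v :=
          lintegral_mono hkey
      _ = ∫⁻ v in Set.Ioi (0:ℝ), f v * ENNReal.ofReal (z ^ (2 - t) * v ^ (t - 1)) :=
          lintegral_indicator measurableSet_Ioi _
      _ = ∫⁻ v in Set.Ioi (0:ℝ), ENNReal.ofReal (z ^ (2 - t)) * (f v * ENNReal.ofReal (v ^ (t - 1))) := by
          refine lintegral_congr fun v => ?_
          rw [ENNReal.ofReal_mul (Real.rpow_nonneg hz.le _)]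
          ring
      _ = ENNReal.ofReal (z ^ (2 - t)) * ∫⁻ v in Set.Ioi (0:ℝ), f v * ENNReal.ofReal (v ^ (t - 1)) :=
          lintegral_const_mul' _ _ ENNReal.ofReal_ne_top
  -- layer cake
  have hlayer : (∫⁻ v in Set.Ioi (0:ℝ), f v * ENNReal.ofReal (v ^ (t - 1))) = L := by
    rw [hL_def, ← lintegral_comp_eq_lintegral_meas_lt_mul (ℙ : Measure Ω)
      (ae_of_all _ hV0) hV.aemeasurable
      (fun s _ => intervalIntegral.intervalIntegrable_rpow' (by linarith))
      (by filter_upwards [ae_restrict_mem measurableSet_Ioi] with s hs using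
        Real.rpow_nonneg (le_of_lt hs) _)]
    refine lintegral_congr fun ω => ?_
    congr 1
    rw [integral_rpow (Or.inl (by linarith : (-1:ℝ) < t - 1))]
    rw [show t - 1 + 1 = t by ring, Real.zero_rpow (by linarith : t ≠ 0)]
    ring
  have ht0 : (0:ℝ) < t := by linarith
  have hint' : Integrable (fun ω => V ω ^ t / t) ℙ := hint.div_const t
  have hL_fin : L ≠ ⊤ := by
    have := (hasFiniteIntegral_iff_ofReal
      (ae_of_all _ fun ω => div_nonneg (Real.rpow_nonneg (hV0 ω) t) ht0.le)).1
      hint'.hasFiniteIntegral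
    exact this.ne
  have hRHS : z ^ (2 - t) * (∫ ω, V ω ^ t ∂ℙ) / t
      = (ENNReal.ofReal (z ^ (2 - t)) * L).toReal := by
    rw [ENNReal.toReal_mul, ENNReal.toReal_ofReal (Real.rpow_nonneg hz.le _)]
    have : L.toReal = ∫ ω, V ω ^ t / t ∂ℙ := by
      rw [hL_def, ← integral_eq_lintegral_of_nonneg_ae
        (ae_of_all _ fun ω => div_nonneg (Real.rpow_nonneg (hV0 ω) t) ht0.le)
        hint'.aestronglyMeasurable]
    rw [this, integral_div, mul_div_assoc]
  rw [hLHS, hRHS]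
  refine ENNReal.toReal_mono (ENNReal.mul_ne_top ENNReal.ofReal_ne_top hL_fin) ?_
  rw [← hlayer]
  exact hTle
end
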